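/- Let λ₁,…,λₙ ∈ k be distinct (n ≥ 2), let vᵢ be the Lagrange interpolation polynomials, and set pᵢ(h) = vᵢ(h−1) − vᵢ(h) for 1 ≤ i ≤ n−1. Then (p₁,…,p_{n−1}) is a basis of the space k_{n−2} of polynomials of degree at most n−2. -/

import Mathlib

open Polynomial

theorem stmt2 (k : Type*) [Field k] [CharZero k] (n : ℕ) (hn : 2 ≤ n)
    (lam : Fin n → k) (hl : Function.Injective lam)
    (p : Fin (n - 1) → Polynomial k)
    (hp : ∀ i : Fin (n - 1),
      p i = (Lagrange.basis Finset.univ lam (Fin.castLE (by omega) i)).comp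
              (Polynomial.X - 1)
            - Lagrange.basis Finset.univ lam (Fin.castLE (by omega) i)) :
    LinearIndependent k p ∧
      Submodule.span k (Set.range p) = Polynomial.degreeLT k (n - 1) := by
  have hcast : n - 1 ≤ n := by omega
  have hinj : Set.InjOn lam (Finset.univ : Finset (Fin n)) := hl.injOn
  set v : Fin n → k[X] := fun i => Lagrange.basis Finset.univ lam i with hv
  have hdegv : ∀ i : Fin n, (v i).degree = ((n - 1 : ℕ) : WithBot ℕ) := by
    intro i
    rw [hv, Lagrange.degree_basis hinj (Finset.mem_univ i), Finset.card_univ,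
      Fintype.card_fin]
  have hvne : ∀ i : Fin n, v i ≠ 0 := by
    intro i h
    have := hdegv i
    rw [h, degree_zero] at this
    exact (by simp : (⊥ : WithBot ℕ) ≠ ((n-1:ℕ) : WithBot ℕ)) this
  have hX1 : (X - 1 : k[X]).natDegree = 1 := by
    simpa using natDegree_X_sub_C (1 : k)
  have hcompne : ∀ w : k[X], w ≠ 0 → w.comp (X - 1) ≠ 0 := by
    intro w hw h
    rcases comp_eq_zero_iff.mp h with h1 | ⟨_, h2⟩
    · exact hw h1
    · have := congrArg natDegree h2
      rw [hX1, natDegree_C] at this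
      omega
  -- each p i has degree < n - 1
  have hdegp : ∀ i : Fin (n-1), (p i).degree < ((n - 1 : ℕ) : WithBot ℕ) := by
    intro i
    rw [hp i]
    set w := v (Fin.castLE hcast i) with hw
    have hdcomp : (w.comp (X - 1)).degree = w.degree := by
      have h1 : (w.comp (X - 1)).natDegree = w.natDegree := by
        rw [natDegree_comp, hX1, mul_one]
      rw [degree_eq_natDegree (hcompne _ (hvne _)), degree_eq_natDegree (hvne _), h1]
    have hlc : (w.comp (X - 1)).leadingCoeff = w.leadingCoeff := by
      rw [leadingCoeff_comp (by rw [hX1]; omega)]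
      have : (X - 1 : k[X]).leadingCoeff = 1 := by
        have hm := monic_X_sub_C (1 : k)
        rw [map_one] at hm
        exact hm
      rw [this, one_pow, mul_one]
    calc (w.comp (X - 1) - w).degree < (w.comp (X-1)).degree :=
          degree_sub_lt hdcomp (hcompne _ (hvne _)) hlc
      _ = ((n-1 : ℕ) : WithBot ℕ) := by rw [hdcomp]; exact hdegv _
  have hmem : ∀ i : Fin (n-1), p i ∈ degreeLT k (n-1) := fun i =>
    mem_degreeLT.mpr (hdegp i)
  -- linear independence
  have hli : LinearIndependent k p := by
    rw [Fintype.linearIndependent_iff]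
    intro g hg j
    set q : k[X] := ∑ i : Fin (n-1), g i • v (Fin.castLE hcast i) with hq
    have hcomp : q.comp (X - 1) - q = 0 := by
      rw [← hg, hq]
      rw [sum_comp]
      rw [← Finset.sum_sub_distrib]
      apply Finset.sum_congr rfl
      intro i _
      rw [hp i, smul_sub, smul_comp]
    have hstep : ∀ x : k, q.eval (x - 1) = q.eval x := by
      intro x
      have := congrArg (Polynomial.eval x) hcomp
      simpa [eval_comp, sub_eq_zero] using this
    have hnat : ∀ m : ℕ, q.eval (-(m : k)) = q.eval 0 := by
      intro m
      induction m with
      | zero => simp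
      | succ t ih =>
        have h1 := hstep (-(t : k))
        have h2 : -(t:k) - 1 = -((t+1 : ℕ) : k) := by push_cast; ring
        rw [h2] at h1
        rw [h1, ih]
    have hqc : q = C (q.eval 0) := by
      have hr : q - C (q.eval 0) = 0 := by
        apply eq_zero_of_infinite_isRoot
        apply Set.Infinite.mono (s := Set.range (fun m : ℕ => -(m : k)))
        · rintro x ⟨m, rfl⟩
          simp [IsRoot, hnat m]
        · exact Set.infinite_range_of_injective
            (neg_injective.comp Nat.cast_injective)
      exact sub_eq_zero.mp hr
    set j0 : Fin n := ⟨n-1, by omega⟩ with hj0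
    have h0 : q.eval (lam j0) = 0 := by
      rw [hq, eval_finset_sum]
      apply Finset.sum_eq_zero
      intro i _
      have hne : Fin.castLE hcast i ≠ j0 := by
        intro h
        have := congrArg Fin.val h
        simp [hj0] at this
        omega
      simp [hv, Lagrange.eval_basis_of_ne hne (Finset.mem_univ j0)]
      exact Or.inr (Lagrange.eval_basis_of_ne hne (Finset.mem_univ j0))
    have hq0 : q = 0 := by
      rw [hqc]
      have : q.eval 0 = 0 := by
        have := congrArg (Polynomial.eval (lam j0)) hqc
        rw [h0, eval_C] at this
        exact this.symm
      rw [this, map_zero]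
    have : q.eval (lam (Fin.castLE hcast j)) = g j := by
      rw [hq, eval_finset_sum]
      rw [Finset.sum_eq_single j]
      · simp [hv, Lagrange.eval_basis_self hinj (Finset.mem_univ (Fin.castLE hcast j))]
      · intro i _ hij
        have hne : Fin.castLE hcast i ≠ Fin.castLE hcast j := by
          intro h
          exact hij ((Fin.castLE_injective hcast) h)
        simp [hv, Lagrange.eval_basis_of_ne hne (Finset.mem_univ _)]
      · intro h
        exact absurd (Finset.mem_univ j) h
    rw [hq0] at this
    simpa using this.symm
  refine ⟨hli, ?_⟩
  -- span
  set P : Fin (n-1) → degreeLT k (n-1) := fun i => ⟨p i, hmem i⟩ with hP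
  have hliP : LinearIndependent k P := by
    apply LinearIndependent.of_comp (Submodule.subtype _)
    exact hli
  have hfin : Module.finrank k (degreeLT k (n-1)) = n - 1 := by
    rw [(Polynomial.degreeLTEquiv k (n-1)).finrank_eq]
    exact Module.finrank_fin_fun k
  have hnonempty : Nonempty (Fin (n-1)) := ⟨⟨0, by omega⟩⟩
  have hspanP : Submodule.span k (Set.range P) = ⊤ := by
    apply hliP.span_eq_top_of_card_eq_finrank
    rw [hfin, Fintype.card_fin]
  have : Submodule.span k (Set.range p) =
      Submodule.map (Submodule.subtype _) (Submodule.span k (Set.range P)) := by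
    rw [Submodule.map_span]
    congr 1
    rw [← Set.range_comp]
    rfl
  rw [this, hspanP, Submodule.map_top, Submodule.range_subtype]
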